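/- Let A be an irreducible aperiodic n×n stochastic matrix with stationary distribution π, and define V_π(x) = (πᵀx)(1−πᵀx). Then for the voter model, for every x ∈ {0,1}ⁿ with x ∉ {0⃗,1⃗}, E[V_π(X_{t+1}) − V_π(X_t) | X_t = x] = − Σ_{u=1}^n π_u² V_{a_u}(x), where V_{a_u}(x) = (a_uᵀx)(1 − a_uᵀx). -/

import Mathlib

open scoped BigOperators Classical
open Finset

noncomputable section

/-- Real-valued 0/1 vector associated with a Boolean state. -/
def val {n : ℕ} (x : Fin n → Bool) : Fin n → ℝ := fun u => if x u then 1 else 0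

/-- Dot product of two vectors. -/
def dotp {n : ℕ} (a x : Fin n → ℝ) : ℝ := ∑ v, a v * x v

/-- A state is a consensus state if all nodes are in the same state. -/
def IsCons {n : ℕ} (x : Fin n → Bool) : Prop := (∀ u, x u = true) ∨ (∀ u, x u = false)

/-- A matrix is stochastic: nonnegative entries, rows summing to one. -/
def IsStochastic {n : ℕ} (A : Matrix (Fin n) (Fin n) ℝ) : Prop :=
  (∀ u v, 0 ≤ A u v) ∧ ∀ u, ∑ v, A u v = 1

/-- Irreducible and aperiodic (primitivity for finite stochastic matrices). -/
def IsIrreducibleAperiodic {n : ℕ} (A : Matrix (Fin n) (Fin n) ℝ) : Prop :=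
  ∃ N : ℕ, ∀ k ≥ N, ∀ u v, 0 < (A ^ k) u v

/-- `π` is the (positive) stationary distribution of `A`: `πᵀ = πᵀ A`. -/
def IsStationaryDist {n : ℕ} (A : Matrix (Fin n) (Fin n) ℝ) (π : Fin n → ℝ) : Prop :=
  (∀ v, 0 < π v) ∧ (∑ v, π v = 1) ∧ ∀ v, ∑ u, π u * A u v = π v

/-- One-step transition probability of the voter model: conditionally on `x`, the
coordinates of the next state are independent Bernoulli(`aᵤᵀ x`). -/
def voterKernel {n : ℕ} (A : Matrix (Fin n) (Fin n) ℝ) (x y : Fin n → Bool) : ℝ :=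
  ∏ u, (if y u then dotp (A u) (val x) else 1 - dotp (A u) (val x))

/-- The Lyapunov function `V_π(x) = (πᵀx)(1 − πᵀx)`. -/
def Vpi {n : ℕ} (π : Fin n → ℝ) (x : Fin n → Bool) : ℝ :=
  dotp π (val x) * (1 - dotp π (val x))

/-- The quantity `Φ_A`: minimum over non-consensus states of
`Σᵤ πᵤ² (aᵤᵀx)(1−aᵤᵀx) / ((πᵀx)(1−πᵀx))`. -/
def PhiA {n : ℕ} (A : Matrix (Fin n) (Fin n) ℝ) (π : Fin n → ℝ) : ℝ :=
  ⨅ x : {x : Fin n → Bool // ¬ IsCons x},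
    (∑ u, (π u) ^ 2 * (dotp (A u) (val x.1) * (1 - dotp (A u) (val x.1)))) / Vpi π x.1

lemma sum_prod_bool {n : ℕ} (f : Fin n → Bool → ℝ) :
    ∑ y : Fin n → Bool, ∏ u, f u (y u) = ∏ u, (f u true + f u false) := by
  rw [← Fintype.prod_sum]
  simp [Fintype.sum_bool]

lemma sum_prod_bool' {n : ℕ} (f : Fin n → Bool → ℝ) (g : (Fin n → Bool) → ℝ)
    (h : ∀ y, g y = ∏ u, f u (y u)) :
    ∑ y, g y = ∏ u, (f u true + f u false) :=
  (Finset.sum_congr rfl (fun y _ => h y)).trans (sum_prod_bool f)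

variable {n : ℕ} (A : Matrix (Fin n) (Fin n) ℝ) (x : Fin n → Bool)

lemma moment0 : ∑ y, voterKernel A x y = 1 :=
  calc ∑ y, voterKernel A x y
      = ∏ u, ((if (true:Bool) then dotp (A u) (val x) else 1 - dotp (A u) (val x))
          + (if (false:Bool) then dotp (A u) (val x) else 1 - dotp (A u) (val x))) :=
        sum_prod_bool' (fun u (b : Bool) => if b then dotp (A u) (val x) else 1 - dotp (A u) (val x)) _ (fun y => rfl)
    _ = 1 := by simp

lemma moment1 (u : Fin n) :
    ∑ y, voterKernel A x y * val y u = dotp (A u) (val x) := by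
  calc ∑ y, voterKernel A x y * val y u
      = ∏ w, ((fun w (b : Bool) =>
          (if b then dotp (A w) (val x) else 1 - dotp (A w) (val x)) *
            (if w = u then (if b then (1:ℝ) else 0) else 1)) w true
        + (fun w (b : Bool) =>
          (if b then dotp (A w) (val x) else 1 - dotp (A w) (val x)) *
            (if w = u then (if b then (1:ℝ) else 0) else 1)) w false) := by
        refine sum_prod_bool' (fun w (b : Bool) =>
          (if b then dotp (A w) (val x) else 1 - dotp (A w) (val x)) *
            (if w = u then (if b then (1:ℝ) else 0) else 1)) _ (fun y => ?_)
        rw [Finset.prod_mul_distrib, Finset.prod_ite_eq']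
        by_cases h : y u <;> simp [voterKernel, _root_.val, h]
    _ = ∏ w, (if w = u then dotp (A w) (val x) else 1) :=
        Finset.prod_congr rfl (fun w _ => by by_cases h : w = u <;> simp [h])
    _ = dotp (A u) (val x) := by rw [Finset.prod_ite_eq']; simp

lemma moment2 (u v : Fin n) (huv : u ≠ v) :
    ∑ y, voterKernel A x y * (val y u * val y v)
      = dotp (A u) (val x) * dotp (A v) (val x) := by
  calc ∑ y, voterKernel A x y * (val y u * val y v)
      = ∏ w, ((fun w (b : Bool) =>
          (if b then dotp (A w) (val x) else 1 - dotp (A w) (val x)) *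
            ((if w = u then (if b then (1:ℝ) else 0) else 1) *
             (if w = v then (if b then (1:ℝ) else 0) else 1))) w true
        + (fun w (b : Bool) =>
          (if b then dotp (A w) (val x) else 1 - dotp (A w) (val x)) *
            ((if w = u then (if b then (1:ℝ) else 0) else 1) *
             (if w = v then (if b then (1:ℝ) else 0) else 1))) w false) := by
        refine sum_prod_bool' (fun w (b : Bool) =>
          (if b then dotp (A w) (val x) else 1 - dotp (A w) (val x)) *
            ((if w = u then (if b then (1:ℝ) else 0) else 1) *
             (if w = v then (if b then (1:ℝ) else 0) else 1))) _ (fun y => ?_)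
        rw [Finset.prod_mul_distrib, Finset.prod_mul_distrib, Finset.prod_ite_eq',
          Finset.prod_ite_eq']
        by_cases h : y u <;> by_cases h' : y v <;>
          simp [voterKernel, _root_.val, h, h'] <;> ring
    _ = ∏ w, ((if w = u then dotp (A w) (val x) else 1) *
          (if w = v then dotp (A w) (val x) else 1)) := by
        refine Finset.prod_congr rfl (fun w _ => ?_)
        by_cases h : w = u <;> by_cases h' : w = v <;> simp [h, h']
        · subst h; subst h'; exact absurd rfl huv
        · subst h; simp [huv]
        · subst h'; simp [Ne.symm huv]
    _ = dotp (A u) (val x) * dotp (A v) (val x) := by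
        rw [Finset.prod_mul_distrib, Finset.prod_ite_eq', Finset.prod_ite_eq']
        simp

lemma moment2' (u v : Fin n) :
    ∑ y, voterKernel A x y * (val y u * val y v)
      = if u = v then dotp (A u) (val x)
        else dotp (A u) (val x) * dotp (A v) (val x) := by
  by_cases h : u = v
  · subst h
    simp only [if_pos rfl]
    have hv : ∀ y : Fin n → Bool, val y u * val y u = val y u := by
      intro y; by_cases h : y u <;> simp [_root_.val, h]
    simp_rw [hv]
    exact moment1 A x u
  · rw [if_neg h]; exact moment2 A x u v h

/-- Expected one-step drift of `V_π` for the voter model at a non-consensus state: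
`E[V_π(X_{t+1}) − V_π(X_t) | X_t = x] = − Σᵤ πᵤ² (aᵤᵀx)(1 − aᵤᵀx)`. -/
theorem voter_drift_identity {n : ℕ} (A : Matrix (Fin n) (Fin n) ℝ) (π : Fin n → ℝ)
    (hA : IsStochastic A) (hirr : IsIrreducibleAperiodic A) (hπ : IsStationaryDist A π)
    (x : Fin n → Bool) (hx : ¬ IsCons x) :
    ∑ y, voterKernel A x y * (Vpi π y - Vpi π x)
      = - ∑ u, (π u) ^ 2 * (dotp (A u) (val x) * (1 - dotp (A u) (val x))) := by
  have hstat : ∑ u, π u * dotp (A u) (val x) = dotp π (val x) := by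
    simp only [dotp, Finset.mul_sum]
    rw [Finset.sum_comm]
    refine Finset.sum_congr rfl (fun v _ => ?_)
    have : ∀ u, π u * (A u v * val x v) = (π u * A u v) * val x v := fun u => by ring
    simp_rw [this]
    rw [← Finset.sum_mul, hπ.2.2 v]
  have hexp : ∀ y : Fin n → Bool, Vpi π y
      = (∑ u, π u * val y u) - ∑ u, ∑ v, (π u * π v) * (val y u * val y v) := by
    intro y
    have hsq : dotp π (val y) * dotp π (val y)
        = ∑ u, ∑ v, (π u * π v) * (val y u * val y v) := by
      unfold dotp
      rw [Finset.sum_mul_sum]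
      exact Finset.sum_congr rfl fun u _ => Finset.sum_congr rfl fun v _ => by ring
    unfold Vpi
    rw [mul_one_sub, hsq]
    rfl
  have hEV : ∑ y, voterKernel A x y * Vpi π y
      = (∑ u, π u * dotp (A u) (val x))
        - ∑ u, ∑ v, (π u * π v) *
            (if u = v then dotp (A u) (val x)
             else dotp (A u) (val x) * dotp (A v) (val x)) := by
    simp_rw [hexp, mul_sub, Finset.mul_sum]
    rw [Finset.sum_sub_distrib]
    congr 1
    · rw [Finset.sum_comm]
      refine Finset.sum_congr rfl fun u _ => ?_
      have : ∀ y : Fin n → Bool, voterKernel A x y * (π u * val y u)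
          = π u * (voterKernel A x y * val y u) := fun y => by ring
      simp_rw [this]
      rw [← Finset.mul_sum, moment1]
    · rw [Finset.sum_comm]
      refine Finset.sum_congr rfl fun u _ => ?_
      rw [Finset.sum_comm]
      refine Finset.sum_congr rfl fun v _ => ?_
      have : ∀ y : Fin n → Bool, voterKernel A x y * ((π u * π v) * (val y u * val y v))
          = (π u * π v) * (voterKernel A x y * (val y u * val y v)) := fun y => by ring
      simp_rw [this]
      rw [← Finset.mul_sum, moment2']
  have hdiag : ∑ u, ∑ v, (π u * π v) *
        (if u = v then dotp (A u) (val x)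
         else dotp (A u) (val x) * dotp (A v) (val x))
      = (∑ u, π u * dotp (A u) (val x)) * (∑ v, π v * dotp (A v) (val x))
        + ∑ u, (π u) ^ 2 *
            (dotp (A u) (val x) - dotp (A u) (val x) * dotp (A u) (val x)) := by
    rw [Finset.sum_mul_sum, ← Finset.sum_add_distrib]
    refine Finset.sum_congr rfl fun u _ => ?_
    have : ∀ v, (π u * π v) *
          (if u = v then dotp (A u) (val x)
           else dotp (A u) (val x) * dotp (A v) (val x))
        = (π u * dotp (A u) (val x)) * (π v * dotp (A v) (val x))
          + (if u = v then (π u) ^ 2 *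
              (dotp (A u) (val x) - dotp (A u) (val x) * dotp (A u) (val x)) else 0) := by
      intro v
      by_cases h : u = v
      · subst h; simp only [if_pos rfl, eq_self_iff_true, if_true]; ring
      · simp only [if_neg h]; ring
    simp_rw [this]
    rw [Finset.sum_add_distrib, Finset.sum_ite_eq]
    simp
  have hK : ∀ y : Fin n → Bool, voterKernel A x y * (Vpi π y - Vpi π x)
      = voterKernel A x y * Vpi π y - voterKernel A x y * Vpi π x := fun y => by ring
  simp_rw [hK]
  rw [Finset.sum_sub_distrib, ← Finset.sum_mul, moment0, one_mul, hEV, hdiag, hstat]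
  have : Vpi π x = dotp π (val x) * (1 - dotp π (val x)) := rfl
  rw [this]
  have hrhs : ∑ u, (π u) ^ 2 * (dotp (A u) (val x) * (1 - dotp (A u) (val x)))
      = ∑ u, (π u) ^ 2 * (dotp (A u) (val x) - dotp (A u) (val x) * dotp (A u) (val x)) :=
    Finset.sum_congr rfl fun u _ => by ring
  rw [hrhs]
  ring
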